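/- (Implicit background estimation removes non-distinctiveness) Fix n ≥ 1. For v ∈ ℝ^n define ImpBG(v) ∈ ℝ^{n+1} to be the vector with background component −logsumexp(v) and remaining components equal to those of v. If σ(ImpBG(v)) = σ(ImpBG(w)) for v, w ∈ ℝ^n, then v = w; i.e., the composition of softmax with the implicit background construction is injective on ℝ^n. -/
import Mathlib


/-- Softmax: `σ(u)_i = exp(u_i) / Σ_j exp(u_j)`. -/
noncomputable def softmax {k : ℕ} (u : Fin k → ℝ) : Fin k → ℝ :=
  fun i => Real.exp (u i) / ∑ j, Real.exp (u j)

/-- `logsumexp(v) = log(Σ_j exp(v_j))`. -/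
noncomputable def logsumexp {n : ℕ} (v : Fin n → ℝ) : ℝ :=
  Real.log (∑ j, Real.exp (v j))

/-- The implicit-background composite vector in `ℝ^{n+1}`: background component
`−logsumexp(v)` followed by the components of `v`. -/
noncomputable def ImpBG {n : ℕ} (v : Fin n → ℝ) : Fin (n + 1) → ℝ :=
  Fin.cons (-logsumexp v) v

/-- (Implicit background estimation removes non-distinctiveness) The composition of
softmax with the implicit background construction is injective on `ℝ^n`:
if `σ(ImpBG(v)) = σ(ImpBG(w))` then `v = w`. -/
theorem softmax_impBG_injective {n : ℕ} (hn : 1 ≤ n) (v w : Fin n → ℝ)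
    (h : softmax (ImpBG v) = softmax (ImpBG w)) : v = w := by
  set Sv := ∑ j, Real.exp (ImpBG v j) with hSv
  set Sw := ∑ j, Real.exp (ImpBG w j) with hSw
  have hSvpos : 0 < Sv := Finset.sum_pos (fun i _ => Real.exp_pos _) ⟨0, Finset.mem_univ _⟩
  have hSwpos : 0 < Sw := Finset.sum_pos (fun i _ => Real.exp_pos _) ⟨0, Finset.mem_univ _⟩
  set r := Sv / Sw with hr
  have hrpos : 0 < r := div_pos hSvpos hSwpos
  have key : ∀ i, Real.exp (ImpBG v i) = r * Real.exp (ImpBG w i) := by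
    intro i
    have h1 := congrFun h i
    simp only [softmax, ← hSv, ← hSw] at h1
    field_simp at h1
    rw [hr, div_mul_eq_mul_div, eq_div_iff hSwpos.ne']
    linarith
  set Ev := ∑ j, Real.exp (v j) with hEv
  set Ew := ∑ j, Real.exp (w j) with hEw
  have hEvpos : 0 < Ev := Finset.sum_pos (fun i _ => Real.exp_pos _) ⟨⟨0, hn⟩, Finset.mem_univ _⟩
  have hEwpos : 0 < Ew := Finset.sum_pos (fun i _ => Real.exp_pos _) ⟨⟨0, hn⟩, Finset.mem_univ _⟩
  have h0 : Ev⁻¹ = r * Ew⁻¹ := by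
    have := key 0
    simpa [ImpBG, logsumexp, Real.exp_neg, Real.exp_log hEvpos, Real.exp_log hEwpos, ← hEv,
      ← hEw] using this
  have hsumeq : Ev = r * Ew := by
    have : ∑ i : Fin n, Real.exp (ImpBG v i.succ) =
        ∑ i : Fin n, (r * Real.exp (ImpBG w i.succ)) := by
      exact Finset.sum_congr rfl fun i _ => key i.succ
    simpa [ImpBG, ← Finset.mul_sum, ← hEv, ← hEw] using this
  have hr1 : r = 1 := by
    have h0' : Ew = r * Ev := by
      field_simp at h0
      nlinarith
    nlinarith
  funext i
  have := key i.succ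
  simp [ImpBG, hr1] at this
  exact this
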